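/- arXiv:1606.03437 — 2 statements merged into one kernel-verified Lean document; each statement's English description precedes it below -/
import Mathlib

section
/- (Lemma 2: cost bound for the re-parametrized control.) Under the setting of Theorem 2 — symmetric positive definite S_k (i ≤ k ≤ N) with, for each i ≤ k ≤ N−1: S_{k+1}⁻¹ − ε_k·H Hᵀ positive definite, X_{k+1} = (S_{k+1}⁻¹ − ε_k·H Hᵀ)⁻¹, R_{ε_k} + Gᵀ X_{k+1} G positive definite, K_k = (R_{ε_k} + Gᵀ X_{k+1} G)⁻¹ (Gᵀ X_{k+1} F + N_{ε_k}ᵀ), and S_k = Fᵀ X_{k+1} F + Q_{ε_k} − (Fᵀ X_{k+1} G + N_{ε_k})(R_{ε_k} + Gᵀ X_{k+1} G)⁻¹ (Fᵀ X_{k+1} G + N_{ε_k})ᵀ — the following holds. For every x_i ∈ ℝⁿ and every sequence v_i, …, v_{N−1} ∈ ℝᵐ, define the trajectory x_{k+1} = (F − G K_k) x_k + G v_k and controls u_k = −K_k x_k + v_k. Then x_Nᵀ S_N x_N + Σ_{k=i}^{N−1} c_k(x_k, u_k) ≤ x_iᵀ S_i x_i + Σ_{k=i}^{N−1} v_kᵀ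 (R_{ε_k} + Gᵀ X_{k+1} G) v_k, where c_k(x, u) = xᵀ Q_{ε_k} x + uᵀ R_{ε_k} u + 2 xᵀ N_{ε_k} u. -/
open Matrix

section AuxStmt8

variable {n' m' : Type*} [Fintype n'] [Fintype m'] [DecidableEq n']

omit [DecidableEq n'] in
lemma dot_trans (M : Matrix n' m' ℝ) (a : n' → ℝ) (b : m' → ℝ) :
    a ⬝ᵥ M *ᵥ b = b ⬝ᵥ Mᵀ *ᵥ a := by
  rw [Matrix.dotProduct_mulVec, Matrix.mulVec_transpose, dotProduct_comm]

omit [DecidableEq n'] in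
lemma psd_nonneg {M : Matrix n' n' ℝ} (h : M.PosSemidef) (x : n' → ℝ) :
    0 ≤ x ⬝ᵥ M *ᵥ x := by
  simpa using h.dotProduct_mulVec_nonneg x

omit [Fintype n'] [DecidableEq n'] in
lemma real_sym {M : Matrix n' n' ℝ} (h : M.IsHermitian) : Mᵀ = M := by
  rw [← Matrix.conjTranspose_eq_transpose_of_trivial]; exact h

omit [DecidableEq n'] in
lemma smul_psd {M : Matrix n' n' ℝ} (h : M.PosSemidef) {c : ℝ} (hc : 0 ≤ c) :
    (c • M).PosSemidef := by
  constructor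
  · show (c • M)ᴴ = c • M
    rw [Matrix.conjTranspose_smul, h.1.eq, star_trivial]
  · exact (h.smul hc).2

omit [DecidableEq n'] in
lemma psd_cs {M : Matrix n' n' ℝ} (h : M.PosSemidef) (a b : n' → ℝ) :
    (a ⬝ᵥ M *ᵥ b) ^ 2 ≤ (a ⬝ᵥ M *ᵥ a) * (b ⬝ᵥ M *ᵥ b) := by
  have hsym : Mᵀ = M := real_sym h.1
  have hba : b ⬝ᵥ M *ᵥ a = a ⬝ᵥ M *ᵥ b := by rw [dot_trans, hsym]
  have key : ∀ t : ℝ, 0 ≤ (b ⬝ᵥ M *ᵥ b) * (t * t)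
      + (2 * (a ⬝ᵥ M *ᵥ b)) * t + a ⬝ᵥ M *ᵥ a := by
    intro t
    have h0 := psd_nonneg h (a + t • b)
    simp only [Matrix.mulVec_add, Matrix.mulVec_smul, dotProduct_add, add_dotProduct,
      dotProduct_smul, smul_dotProduct, smul_eq_mul] at h0
    rw [hba] at h0
    nlinarith [h0]
  have hd := discrim_le_zero key
  rw [discrim] at hd
  nlinarith [hd]

lemma inv_antitone {A B : Matrix n' n' ℝ} (hA : A.PosDef) (hB : B.PosDef)
    (hAB : (B - A).PosSemidef) (x : n' → ℝ) :
    x ⬝ᵥ B⁻¹ *ᵥ x ≤ x ⬝ᵥ A⁻¹ *ᵥ x := by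
  by_cases hx : x = 0
  · simp [hx]
  have hAsym : Aᵀ = A := real_sym hA.1
  have hAd : IsUnit A.det := (Matrix.isUnit_iff_isUnit_det A).mp hA.isUnit
  have hBd : IsUnit B.det := (Matrix.isUnit_iff_isUnit_det B).mp hB.isUnit
  set u := A⁻¹ *ᵥ x with hu
  set w := B⁻¹ *ᵥ x with hw
  have hAu : A *ᵥ u = x := by
    rw [hu, Matrix.mulVec_mulVec, Matrix.mul_nonsing_inv _ hAd, Matrix.one_mulVec]
  have hBw : B *ᵥ w = x := by
    rw [hw, Matrix.mulVec_mulVec, Matrix.mul_nonsing_inv _ hBd, Matrix.one_mulVec]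
  have hs : u ⬝ᵥ A *ᵥ u = x ⬝ᵥ A⁻¹ *ᵥ x := by
    rw [hAu, dotProduct_comm]
  have ht : w ⬝ᵥ B *ᵥ w = x ⬝ᵥ B⁻¹ *ᵥ x := by
    rw [hBw, dotProduct_comm]
  have hcross : u ⬝ᵥ A *ᵥ w = x ⬝ᵥ B⁻¹ *ᵥ x := by
    rw [dot_trans, hAsym, hAu, dotProduct_comm]
  have hcs := psd_cs hA.posSemidef u w
  rw [hcross, hs] at hcs
  have hwABw : w ⬝ᵥ A *ᵥ w ≤ w ⬝ᵥ B *ᵥ w := by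
    have := psd_nonneg hAB w
    simp only [Matrix.sub_mulVec, dotProduct_sub] at this
    linarith
  have htpos : 0 < x ⬝ᵥ B⁻¹ *ᵥ x := by
    have := (hB.inv).dotProduct_mulVec_pos hx
    simpa using this
  have hsnn : 0 ≤ x ⬝ᵥ A⁻¹ *ᵥ x := psd_nonneg (hA.inv).posSemidef x
  rw [ht] at hwABw
  nlinarith [hcs, hwABw, htpos, hsnn]

end AuxStmt8

lemma step_eq {nn mm : ℕ} {F : Matrix (Fin nn) (Fin nn) ℝ} {G : Matrix (Fin nn) (Fin mm) ℝ}
    {P Qe : Matrix (Fin nn) (Fin nn) ℝ} {Re : Matrix (Fin mm) (Fin mm) ℝ}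
    {Ne : Matrix (Fin nn) (Fin mm) ℝ}
    (hPsym : Pᵀ = P) (hA : (Re + Gᵀ * P * G).PosDef)
    {K : Matrix (Fin mm) (Fin nn) ℝ}
    (hK : K = (Re + Gᵀ * P * G)⁻¹ * (Gᵀ * P * F + Neᵀ))
    (x : Fin nn → ℝ) (v : Fin mm → ℝ) {u : Fin mm → ℝ} (hu : u = -(K *ᵥ x) + v)
    {y : Fin nn → ℝ} (hy : y = (F - G * K) *ᵥ x + G *ᵥ v) :
    y ⬝ᵥ P *ᵥ y + (x ⬝ᵥ Qe *ᵥ x + u ⬝ᵥ Re *ᵥ u + 2 * (x ⬝ᵥ Ne *ᵥ u))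
      = x ⬝ᵥ (Fᵀ * P * F + Qe
          - (Fᵀ * P * G + Ne) * (Re + Gᵀ * P * G)⁻¹ * (Fᵀ * P * G + Ne)ᵀ) *ᵥ x
        + v ⬝ᵥ (Re + Gᵀ * P * G) *ᵥ v := by
  set A := Re + Gᵀ * P * G with hAdef
  set W := Fᵀ * P * G + Ne with hWdef
  have hWt : Wᵀ = Gᵀ * P * F + Neᵀ := by
    rw [hWdef, Matrix.transpose_add, Matrix.transpose_mul, Matrix.transpose_mul,
      Matrix.transpose_transpose, hPsym, Matrix.mul_assoc]
  rw [← hWt] at hK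
  have hAsym : Aᵀ = A := real_sym hA.1
  have hAd : IsUnit A.det := (Matrix.isUnit_iff_isUnit_det A).mp hA.isUnit
  have hAAinv : A * A⁻¹ = 1 := Matrix.mul_nonsing_inv _ hAd
  have hAK : A * K = Wᵀ := by
    rw [hK, ← Matrix.mul_assoc, hAAinv, Matrix.one_mul]
  have hy' : y = F *ᵥ x + G *ᵥ u := by
    rw [hy, hu]
    simp only [Matrix.sub_mulVec, Matrix.mulVec_add, Matrix.mulVec_neg,
      Matrix.mulVec_mulVec]
    abel
  have hv : v = u + K *ᵥ x := by rw [hu]; abel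
  have c1 : u ⬝ᵥ A *ᵥ (K *ᵥ x) = x ⬝ᵥ W *ᵥ u := by
    rw [Matrix.mulVec_mulVec, hAK, dot_trans, Matrix.transpose_transpose]
  have c2 : (K *ᵥ x) ⬝ᵥ A *ᵥ u = x ⬝ᵥ W *ᵥ u := by
    rw [dot_trans, hAsym, c1]
  have c3 : (K *ᵥ x) ⬝ᵥ A *ᵥ (K *ᵥ x) = x ⬝ᵥ (W * A⁻¹ * Wᵀ) *ᵥ x := by
    rw [Matrix.mulVec_mulVec, hAK, dot_trans, Matrix.transpose_transpose,
      Matrix.mulVec_mulVec, hK, ← Matrix.mul_assoc]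
  have c4 : u ⬝ᵥ A *ᵥ u = u ⬝ᵥ Re *ᵥ u + (G *ᵥ u) ⬝ᵥ P *ᵥ (G *ᵥ u) := by
    rw [hAdef, Matrix.add_mulVec, dotProduct_add]
    congr 1
    rw [← Matrix.mulVec_mulVec, ← Matrix.mulVec_mulVec, dot_trans Gᵀ,
      Matrix.transpose_transpose, dotProduct_comm]
  have c5 : x ⬝ᵥ W *ᵥ u = (F *ᵥ x) ⬝ᵥ P *ᵥ (G *ᵥ u) + x ⬝ᵥ Ne *ᵥ u := by
    rw [hWdef, Matrix.add_mulVec, dotProduct_add]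
    congr 1
    rw [← Matrix.mulVec_mulVec, ← Matrix.mulVec_mulVec, dot_trans Fᵀ,
      Matrix.transpose_transpose, dotProduct_comm]
  have c6 : x ⬝ᵥ (Fᵀ * P * F) *ᵥ x = (F *ᵥ x) ⬝ᵥ P *ᵥ (F *ᵥ x) := by
    rw [← Matrix.mulVec_mulVec, ← Matrix.mulVec_mulVec, dot_trans Fᵀ,
      Matrix.transpose_transpose, dotProduct_comm]
  have hcrossP : (G *ᵥ u) ⬝ᵥ P *ᵥ (F *ᵥ x) = (F *ᵥ x) ⬝ᵥ P *ᵥ (G *ᵥ u) := by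
    rw [dot_trans, hPsym]
  rw [hy', hv]
  simp only [Matrix.add_mulVec, Matrix.sub_mulVec, Matrix.mulVec_add, dotProduct_add,
    add_dotProduct, dotProduct_sub, c1, c2, c3, c4, c5, c6, hcrossP]
  ring

theorem stmt_8 {n m p l : ℕ} (i N : ℕ) (hiN : i < N)
    (F : Matrix (Fin n) (Fin n) ℝ) (G : Matrix (Fin n) (Fin m) ℝ)
    (H : Matrix (Fin n) (Fin p) ℝ)
    (E₁ : Matrix (Fin l) (Fin n) ℝ) (E₂ : Matrix (Fin l) (Fin m) ℝ)
    (Q : Matrix (Fin n) (Fin n) ℝ) (R : Matrix (Fin m) (Fin m) ℝ)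
    (hQ : Q.PosSemidef) (hR : R.PosSemidef)
    (ε : ℕ → ℝ) (hε : ∀ k, i ≤ k → k < N → 0 < ε k)
    (S : ℕ → Matrix (Fin n) (Fin n) ℝ)
    (hS : ∀ k, i ≤ k → k ≤ N → (S k).PosDef)
    (X : ℕ → Matrix (Fin n) (Fin n) ℝ)
    (Qε : ℕ → Matrix (Fin n) (Fin n) ℝ)
    (hQε : ∀ k, Qε k = Q + (ε k)⁻¹ • (E₁ᵀ * E₁))
    (Rε : ℕ → Matrix (Fin m) (Fin m) ℝ)
    (hRε : ∀ k, Rε k = R + (ε k)⁻¹ • (E₂ᵀ * E₂))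
    (Nε : ℕ → Matrix (Fin n) (Fin m) ℝ)
    (hNε : ∀ k, Nε k = (ε k)⁻¹ • (E₁ᵀ * E₂))
    (hXpd : ∀ k, i ≤ k → k < N → ((S (k + 1))⁻¹ - ε k • (H * Hᵀ)).PosDef)
    (hX : ∀ k, i ≤ k → k < N → X (k + 1) = ((S (k + 1))⁻¹ - ε k • (H * Hᵀ))⁻¹)
    (hRX : ∀ k, i ≤ k → k < N → (Rε k + Gᵀ * X (k + 1) * G).PosDef)
    (K : ℕ → Matrix (Fin m) (Fin n) ℝ)
    (hK : ∀ k, i ≤ k → k < N →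
      K k = (Rε k + Gᵀ * X (k + 1) * G)⁻¹ * (Gᵀ * X (k + 1) * F + (Nε k)ᵀ))
    (hSrec : ∀ k, i ≤ k → k < N →
      S k = Fᵀ * X (k + 1) * F + Qε k
        - (Fᵀ * X (k + 1) * G + Nε k) * (Rε k + Gᵀ * X (k + 1) * G)⁻¹
            * (Fᵀ * X (k + 1) * G + Nε k)ᵀ)
    (v : ℕ → Fin m → ℝ)
    (x : ℕ → Fin n → ℝ) (u : ℕ → Fin m → ℝ)
    (hx : ∀ k, i ≤ k → k < N →
      x (k + 1) = (F - G * K k).mulVec (x k) + G.mulVec (v k))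
    (hu : ∀ k, i ≤ k → k < N → u k = -(K k).mulVec (x k) + v k) :
    x N ⬝ᵥ (S N).mulVec (x N)
      + ∑ k ∈ Finset.Ico i N,
          (x k ⬝ᵥ (Qε k).mulVec (x k) + u k ⬝ᵥ (Rε k).mulVec (u k)
            + 2 * (x k ⬝ᵥ (Nε k).mulVec (u k)))
      ≤ x i ⬝ᵥ (S i).mulVec (x i)
        + ∑ k ∈ Finset.Ico i N, v k ⬝ᵥ (Rε k + Gᵀ * X (k + 1) * G).mulVec (v k) := by
  have stepk : ∀ k, i ≤ k → k < N →
      x (k + 1) ⬝ᵥ S (k + 1) *ᵥ x (k + 1)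
        + (x k ⬝ᵥ Qε k *ᵥ x k + u k ⬝ᵥ Rε k *ᵥ u k + 2 * (x k ⬝ᵥ Nε k *ᵥ u k))
      ≤ x k ⬝ᵥ S k *ᵥ x k + v k ⬝ᵥ (Rε k + Gᵀ * X (k + 1) * G) *ᵥ v k := by
    intro k hik hkN
    have hMpd := hXpd k hik hkN
    have hPsym : (X (k + 1))ᵀ = X (k + 1) := by
      rw [hX k hik hkN, Matrix.transpose_nonsing_inv, real_sym hMpd.1]
    have E := step_eq (Qe := Qε k) hPsym (hRX k hik hkN) (hK k hik hkN) (x k) (v k)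
      (hu k hik hkN) (hx k hik hkN)
    rw [← hSrec k hik hkN] at E
    have hSpd := hS (k + 1) (le_trans hik (Nat.le_succ k)) (Nat.succ_le_of_lt hkN)
    have hBpd : ((S (k + 1))⁻¹).PosDef := hSpd.inv
    have hdiff : ((S (k + 1))⁻¹ - ((S (k + 1))⁻¹ - ε k • (H * Hᵀ))).PosSemidef := by
      rw [sub_sub_cancel]
      refine smul_psd ?_ (le_of_lt (hε k hik hkN))
      have := Matrix.posSemidef_self_mul_conjTranspose H
      rwa [Matrix.conjTranspose_eq_transpose_of_trivial] at this
    have hineq := inv_antitone hMpd hBpd hdiff (x (k + 1))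
    rw [Matrix.nonsing_inv_nonsing_inv _
      ((Matrix.isUnit_iff_isUnit_det _).mp hSpd.isUnit), ← hX k hik hkN] at hineq
    linarith [E, hineq]
  have main : ∀ j, i ≤ j → j ≤ N →
      x j ⬝ᵥ S j *ᵥ x j
        + ∑ k ∈ Finset.Ico i j,
            (x k ⬝ᵥ Qε k *ᵥ x k + u k ⬝ᵥ Rε k *ᵥ u k + 2 * (x k ⬝ᵥ Nε k *ᵥ u k))
      ≤ x i ⬝ᵥ S i *ᵥ x i
        + ∑ k ∈ Finset.Ico i j, v k ⬝ᵥ (Rε k + Gᵀ * X (k + 1) * G) *ᵥ v k := by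
    intro j hj
    induction j, hj using Nat.le_induction with
    | base => intro _; simp
    | succ j hij IH =>
      intro hjN
      have hjN' : j < N := hjN
      have IH' := IH (le_of_lt hjN')
      rw [Finset.sum_Ico_succ_top hij, Finset.sum_Ico_succ_top hij]
      have := stepk j hij hjN'
      linarith
  exact main N (le_of_lt hiN) le_rfl
end

section
/- (Feasibility robustness of the GCMPC, combining Lemma 3, Corollary 1, Lemma 4 and Theorem 3.) Let F ∈ ℝ^{n×n}, G ∈ ℝ^{n×m}, H ∈ ℝ^{n×p}, E₁ ∈ ℝ^{l×n}, E₂ ∈ ℝ^{l×m}, K ∈ ℝ^{m×n}, and set F̃ = F − G K and Ẽ₁ = E₁ − E₂ K. Define φ_k(x, v) = ‖Ẽ₁ x + E₂ v‖₂, let ρ_i ≥ 0 satisfy ‖Ẽ₁ F̃^i H z‖₂ ≤ ρ_i ‖z‖₂ for all z ∈ ℝᵖ and i ≥ 0, let c(k, i) = ρ_{k−i−1} + Σ_{j=0}^{k−i−2} ρ_j · c(k−j−1, i) for 0 ≤ i < k, and for a nominal trajectory x_{k+1} = F̃ x_k + G v_k set φ̄_k = φ_k(x_k, v_k) + Σ_{i=0}^{k−1}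 c(k, i) φ_i(x_i, v_i). Let A_k ∈ ℝ^{q×n}, B_k ∈ ℝ^{q×m}, c_k ∈ ℝ^q describe constraints, and Ã_k = A_k − B_k K. Assume that for some k ≥ 0 every row index 1 ≤ r ≤ q satisfies Ã_k^{(r)} x_k + B_k^{(r)} v_k + c_k^{(r)} + Σ_{j=0}^{k−1} ‖(F̃^{k−j−1} H)ᵀ (Ã_k^{(r)})ᵀ‖₂ · φ̄_j ≤ 0. Then for every disturbance sequence Δ_0, Δ_1, … in ℝ^{p×l} with ‖Δ_j z‖₂ ≤ ‖z‖₂ for all z, the uncertain trajectory defined by x̄_0 = x_0 and x̄_{j+1} = (F + H Δ_j E₁) x̄_j + (G + H Δ_j E₂) u_j with u_j = −K x̄_j + v_j satisfies A_k x̄_k + B_k u_k + c_k ≤ 0 componentwise. -/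
open Matrix

/-- Euclidean norm of a real vector. -/
noncomputable def vecEnorm {d : ℕ} (x : Fin d → ℝ) : ℝ := Real.sqrt (x ⬝ᵥ x)

lemma vecEnorm_eq {d : ℕ} (x : Fin d → ℝ) :
    vecEnorm x = ‖(WithLp.equiv 2 (Fin d → ℝ)).symm x‖ := by
  rw [vecEnorm, EuclideanSpace.norm_eq]
  congr 1
  simp [dotProduct, sq]

lemma vecEnorm_nonneg' {d : ℕ} (x : Fin d → ℝ) : 0 ≤ vecEnorm x := Real.sqrt_nonneg _

lemma vecEnorm_add_le {d : ℕ} (x y : Fin d → ℝ) : vecEnorm (x + y) ≤ vecEnorm x + vecEnorm y := by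
  simp only [vecEnorm_eq]
  exact norm_add_le _ _

lemma vecEnorm_sum_le {d : ℕ} (s : Finset ℕ) (f : ℕ → Fin d → ℝ) :
    vecEnorm (∑ i ∈ s, f i) ≤ ∑ i ∈ s, vecEnorm (f i) := by
  simp only [vecEnorm_eq]
  simpa using norm_sum_le s (fun i => (WithLp.equiv 2 (Fin d → ℝ)).symm (f i))

lemma dot_le_enorm {d : ℕ} (a b : Fin d → ℝ) : a ⬝ᵥ b ≤ vecEnorm a * vecEnorm b := by
  simp only [vecEnorm_eq]
  have := real_inner_le_norm ((WithLp.equiv 2 (Fin d → ℝ)).symm a)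
    ((WithLp.equiv 2 (Fin d → ℝ)).symm b)
  simpa [PiLp.inner_apply, dotProduct, mul_comm] using this

lemma swap_sum (j : ℕ) (f : ℕ → ℕ → ℝ) :
    ∑ a ∈ Finset.range j, ∑ b ∈ Finset.range a, f a b
      = ∑ b ∈ Finset.range j, ∑ j' ∈ Finset.range (j - b - 1), f (j - j' - 1) b := by
  rw [Finset.sum_sigma', Finset.sum_sigma']
  apply Finset.sum_nbij' (i := fun ab => ⟨ab.2, j - ab.1 - 1⟩)
    (j := fun bj => ⟨j - bj.2 - 1, bj.1⟩)
  · rintro ⟨a, b⟩ h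
    simp only [Finset.mem_sigma, Finset.mem_range] at h ⊢
    omega
  · rintro ⟨b, j'⟩ h
    simp only [Finset.mem_sigma, Finset.mem_range] at h ⊢
    omega
  · rintro ⟨a, b⟩ h
    simp only [Finset.mem_sigma, Finset.mem_range] at h
    dsimp only
    simp only [Sigma.mk.inj_iff, heq_eq_eq]
    constructor <;> first | exact trivial | omega
  · rintro ⟨b, j'⟩ h
    simp only [Finset.mem_sigma, Finset.mem_range] at h
    dsimp only
    simp only [Sigma.mk.inj_iff, heq_eq_eq]
    constructor <;> first | exact trivial | omega
  · rintro ⟨a, b⟩ h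
    simp only [Finset.mem_sigma, Finset.mem_range] at h
    dsimp only
    congr 1
    omega

lemma mulVec_sum' {a b : ℕ} (M : Matrix (Fin a) (Fin b) ℝ) (s : Finset ℕ)
    (f : ℕ → Fin b → ℝ) : M.mulVec (∑ i ∈ s, f i) = ∑ i ∈ s, M.mulVec (f i) := by
  have := map_sum (Matrix.mulVecLin M) f s
  simpa only [Matrix.mulVecLin_apply] using this

lemma dotProduct_sum' {a : ℕ} (v : Fin a → ℝ) (s : Finset ℕ) (f : ℕ → Fin a → ℝ) :
    v ⬝ᵥ (∑ i ∈ s, f i) = ∑ i ∈ s, v ⬝ᵥ f i := by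
  simp [dotProduct, Finset.mul_sum]
  rw [Finset.sum_comm]

lemma row_mul_dot {a b d : ℕ} (B : Matrix (Fin a) (Fin b) ℝ) (K : Matrix (Fin b) (Fin d) ℝ)
    (r : Fin a) (y : Fin d → ℝ) : (B * K) r ⬝ᵥ y = B r ⬝ᵥ K.mulVec y := by
  rw [Matrix.dotProduct_mulVec]
  congr 1

theorem stmt_13 {n m p l q : ℕ}
    (F : Matrix (Fin n) (Fin n) ℝ) (G : Matrix (Fin n) (Fin m) ℝ)
    (H : Matrix (Fin n) (Fin p) ℝ)
    (E₁ : Matrix (Fin l) (Fin n) ℝ) (E₂ : Matrix (Fin l) (Fin m) ℝ)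
    (K : Matrix (Fin m) (Fin n) ℝ)
    (Ftil : Matrix (Fin n) (Fin n) ℝ) (hFtil : Ftil = F - G * K)
    (Etil₁ : Matrix (Fin l) (Fin n) ℝ) (hEtil₁ : Etil₁ = E₁ - E₂ * K)
    (φ : (Fin n → ℝ) → (Fin m → ℝ) → ℝ)
    (hφ : ∀ x v, φ x v = vecEnorm (Etil₁.mulVec x + E₂.mulVec v))
    (ρ : ℕ → ℝ) (hρ0 : ∀ i, 0 ≤ ρ i)
    (hρ : ∀ (i : ℕ) (z : Fin p → ℝ),
      vecEnorm ((Etil₁ * Ftil ^ i * H).mulVec z) ≤ ρ i * vecEnorm z)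
    (c : ℕ → ℕ → ℝ)
    (hc : ∀ i k, i < k →
      c k i = ρ (k - i - 1) + ∑ j ∈ Finset.range (k - i - 1), ρ j * c (k - j - 1) i)
    (x : ℕ → Fin n → ℝ) (v : ℕ → Fin m → ℝ)
    (hx : ∀ j, x (j + 1) = Ftil.mulVec (x j) + G.mulVec (v j))
    (φbar : ℕ → ℝ)
    (hφbar : ∀ k, φbar k = φ (x k) (v k) + ∑ i ∈ Finset.range k, c k i * φ (x i) (v i))
    (A : Matrix (Fin q) (Fin n) ℝ) (B : Matrix (Fin q) (Fin m) ℝ) (cvec : Fin q → ℝ)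
    (Atil : Matrix (Fin q) (Fin n) ℝ) (hAtil : Atil = A - B * K)
    (k : ℕ)
    (hrob : ∀ r : Fin q,
      Atil r ⬝ᵥ x k + B r ⬝ᵥ v k + cvec r
        + ∑ j ∈ Finset.range k,
            vecEnorm ((Ftil ^ (k - j - 1) * H)ᵀ.mulVec (Atil r)) * φbar j
      ≤ 0) :
    ∀ Δ : ℕ → Matrix (Fin p) (Fin l) ℝ,
      (∀ j, ∀ z : Fin l → ℝ, vecEnorm ((Δ j).mulVec z) ≤ vecEnorm z) →
      ∀ xbar : ℕ → Fin n → ℝ, ∀ u : ℕ → Fin m → ℝ,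
        xbar 0 = x 0 →
        (∀ j, u j = -K.mulVec (xbar j) + v j) →
        (∀ j, xbar (j + 1)
          = (F + H * Δ j * E₁).mulVec (xbar j) + (G + H * Δ j * E₂).mulVec (u j)) →
        ∀ r : Fin q, A r ⬝ᵥ xbar k + B r ⬝ᵥ u k + cvec r ≤ 0 := by
  intro Δ hΔ xbar u h0 hu hstep r
  -- the uncertainty input
  set w : ℕ → Fin l → ℝ := fun j => Etil₁.mulVec (xbar j) + E₂.mulVec (v j) with hw
  -- the error between uncertain and nominal trajectories
  set e : ℕ → Fin n → ℝ := fun j => xbar j - x j with he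
  -- key identity on φbar
  have key : ∀ j, φbar j
      = φ (x j) (v j) + ∑ i ∈ Finset.range j, ρ (j - i - 1) * φbar i := by
    intro j
    rw [hφbar j]
    congr 1
    have expand : ∑ i ∈ Finset.range j, ρ (j - i - 1) * φbar i
        = ∑ i ∈ Finset.range j, ρ (j - i - 1) * φ (x i) (v i)
          + ∑ a ∈ Finset.range j, ∑ b ∈ Finset.range a,
              ρ (j - a - 1) * (c a b * φ (x b) (v b)) := by
      rw [← Finset.sum_add_distrib]
      apply Finset.sum_congr rfl
      intro i _
      rw [hφbar i, mul_add, Finset.mul_sum]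
    rw [expand, swap_sum]
    have : ∀ i ∈ Finset.range j, c j i * φ (x i) (v i)
        = ρ (j - i - 1) * φ (x i) (v i)
          + ∑ j' ∈ Finset.range (j - i - 1),
              ρ (j - (j - j' - 1) - 1) * (c (j - j' - 1) i * φ (x i) (v i)) := by
      intro i hi
      rw [Finset.mem_range] at hi
      rw [hc i j hi, add_mul, Finset.sum_mul]
      congr 1
      apply Finset.sum_congr rfl
      intro j' hj'
      rw [Finset.mem_range] at hj'
      have : j - (j - j' - 1) - 1 = j' := by omega
      rw [this]
      ring
    rw [Finset.sum_congr rfl this, Finset.sum_add_distrib]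
  -- closed-loop dynamics for the uncertain trajectory
  have hclosed : ∀ j, xbar (j + 1)
      = Ftil.mulVec (xbar j) + G.mulVec (v j) + H.mulVec ((Δ j).mulVec (w j)) := by
    intro j
    rw [hstep j, hu j, hw]
    subst hFtil hEtil₁
    simp only [Matrix.add_mulVec, Matrix.sub_mulVec, Matrix.mulVec_add, Matrix.mulVec_neg,
      Matrix.mulVec_smul, Matrix.mulVec_sub, ← Matrix.mulVec_mulVec]
    abel
  -- error dynamics
  have herr : ∀ j, e (j + 1) = Ftil.mulVec (e j) + H.mulVec ((Δ j).mulVec (w j)) := by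
    intro j
    rw [he]
    simp only
    rw [hclosed j, hx j, Matrix.mulVec_sub]
    abel
  -- explicit solution of the error dynamics
  have hek : ∀ j, e j
      = ∑ i ∈ Finset.range j, (Ftil ^ (j - i - 1) * H).mulVec ((Δ i).mulVec (w i)) := by
    intro j
    induction j with
    | zero => simp [he, h0]
    | succ j ih =>
      rw [herr j, ih, mulVec_sum', Finset.sum_range_succ]
      congr 1
      · apply Finset.sum_congr rfl
        intro i hi
        rw [Finset.mem_range] at hi
        rw [Matrix.mulVec_mulVec, ← Matrix.mul_assoc]
        have hpow : Ftil * Ftil ^ (j - i - 1) = Ftil ^ (j + 1 - i - 1) := by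
          rw [← pow_succ']
          congr 1
          omega
        rw [hpow]
      · have : j + 1 - j - 1 = 0 := by omega
        rw [this, pow_zero, Matrix.one_mul]
  -- bound on the uncertainty input
  have hwb : ∀ j, vecEnorm (w j) ≤ φbar j := by
    intro j
    induction j using Nat.strong_induction_on with
    | _ j ih =>
      have hw1 : w j = (Etil₁.mulVec (x j) + E₂.mulVec (v j)) + Etil₁.mulVec (e j) := by
        rw [hw, he]
        simp only
        rw [Matrix.mulVec_sub]
        abel
      have h1 : vecEnorm (w j) ≤ φ (x j) (v j) + vecEnorm (Etil₁.mulVec (e j)) := by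
        rw [hw1, hφ]
        exact vecEnorm_add_le _ _
      have h2 : Etil₁.mulVec (e j)
          = ∑ i ∈ Finset.range j,
              (Etil₁ * Ftil ^ (j - i - 1) * H).mulVec ((Δ i).mulVec (w i)) := by
        rw [hek j, mulVec_sum']
        apply Finset.sum_congr rfl
        intro i _
        rw [Matrix.mulVec_mulVec, Matrix.mul_assoc]
      have h3 : vecEnorm (Etil₁.mulVec (e j))
          ≤ ∑ i ∈ Finset.range j, ρ (j - i - 1) * φbar i := by
        rw [h2]
        calc vecEnorm (∑ i ∈ Finset.range j,
                (Etil₁ * Ftil ^ (j - i - 1) * H).mulVec ((Δ i).mulVec (w i)))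
            ≤ ∑ i ∈ Finset.range j,
                vecEnorm ((Etil₁ * Ftil ^ (j - i - 1) * H).mulVec ((Δ i).mulVec (w i))) :=
              vecEnorm_sum_le _ _
          _ ≤ ∑ i ∈ Finset.range j, ρ (j - i - 1) * φbar i := by
              apply Finset.sum_le_sum
              intro i hi
              rw [Finset.mem_range] at hi
              calc vecEnorm ((Etil₁ * Ftil ^ (j - i - 1) * H).mulVec ((Δ i).mulVec (w i)))
                  ≤ ρ (j - i - 1) * vecEnorm ((Δ i).mulVec (w i)) := hρ _ _
                _ ≤ ρ (j - i - 1) * φbar i := by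
                    apply mul_le_mul_of_nonneg_left _ (hρ0 _)
                    exact le_trans (hΔ i (w i)) (ih i hi)
      calc vecEnorm (w j) ≤ φ (x j) (v j) + vecEnorm (Etil₁.mulVec (e j)) := h1
        _ ≤ φ (x j) (v j) + ∑ i ∈ Finset.range j, ρ (j - i - 1) * φbar i := by linarith
        _ = φbar j := (key j).symm
  -- rewrite the constraint row for the uncertain trajectory
  have hrow : A r ⬝ᵥ xbar k + B r ⬝ᵥ u k + cvec r
      = Atil r ⬝ᵥ x k + B r ⬝ᵥ v k + cvec r + Atil r ⬝ᵥ e k := by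
    rw [hu k, hAtil]
    have hA : (A - B * K) r = A r - (B * K) r := rfl
    have hx' : xbar k = x k + e k := by rw [he]; simp
    rw [hA]
    simp only [sub_dotProduct, dotProduct_add, dotProduct_neg,
      Matrix.mulVec_neg, row_mul_dot, hx', Matrix.mulVec_add]
    ring
  -- bound the error term
  have herrb : Atil r ⬝ᵥ e k
      ≤ ∑ j ∈ Finset.range k,
          vecEnorm ((Ftil ^ (k - j - 1) * H)ᵀ.mulVec (Atil r)) * φbar j := by
    rw [hek k, dotProduct_sum']
    apply Finset.sum_le_sum
    intro j hj
    rw [Finset.mem_range] at hj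
    have hdp : Atil r ⬝ᵥ (Ftil ^ (k - j - 1) * H).mulVec ((Δ j).mulVec (w j))
        = (Ftil ^ (k - j - 1) * H)ᵀ.mulVec (Atil r) ⬝ᵥ (Δ j).mulVec (w j) := by
      rw [Matrix.dotProduct_mulVec, Matrix.mulVec_transpose]
    rw [hdp]
    calc (Ftil ^ (k - j - 1) * H)ᵀ.mulVec (Atil r) ⬝ᵥ (Δ j).mulVec (w j)
        ≤ vecEnorm ((Ftil ^ (k - j - 1) * H)ᵀ.mulVec (Atil r)) * vecEnorm ((Δ j).mulVec (w j)) :=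
          dot_le_enorm _ _
      _ ≤ vecEnorm ((Ftil ^ (k - j - 1) * H)ᵀ.mulVec (Atil r)) * φbar j := by
          apply mul_le_mul_of_nonneg_left _ (vecEnorm_nonneg' _)
          exact le_trans (hΔ j (w j)) (hwb j)
  rw [hrow]
  have := hrob r
  linarith
end
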